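/- Let S be a uniformly random k-subset of an N-element vertex set and y a fixed subset. Define L_S(y) = max(0, |S ∩ y| − 1). Then E[L_S(y)] ≤ (k|y|/N)²/2. -/

import Mathlib

open Finset

section helpers
variable {V : Type*} [Fintype V] [DecidableEq V]

lemma aux_pow (k : ℕ) (x : ℝ) (hx0 : 0 ≤ x) (hx1 : x ≤ 1) :
    (1 - x) ^ k ≤ 1 - k * x + (k * x) ^ 2 / 2 := by
  induction k with
  | zero => norm_num
  | succ j ih =>
    have h1 : (0:ℝ) ≤ 1 - x := by linarith
    have := mul_le_mul_of_nonneg_right ih h1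
    calc (1 - x) ^ (j+1) = (1-x)^j * (1-x) := by ring
    _ ≤ (1 - j*x + (j*x)^2/2) * (1-x) := this
    _ ≤ 1 - (j+1:ℕ) * x + ((j+1:ℕ) * x)^2/2 := by
        push_cast
        nlinarith [sq_nonneg ((j:ℝ)*x), mul_nonneg (mul_nonneg (mul_nonneg (Nat.cast_nonneg j : (0:ℝ) ≤ j) (Nat.cast_nonneg j)) hx0) (mul_nonneg hx0 hx0)]

lemma aux_step (N m j : ℕ) (hm : m ≤ N) : (N - m - j) * N ≤ (N - j) * (N - m) := by
  rcases le_or_gt (N - m) j with h | h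
  · simp [Nat.sub_eq_zero_of_le h]
  · have hj : j ≤ N - m := h.le
    have hjN : j ≤ N := hj.trans (Nat.sub_le _ _)
    zify [hj, hjN, hm]
    nlinarith [Nat.zero_le (j*m)]

lemma aux_choose (N m : ℕ) (hm : m ≤ N) : ∀ k : ℕ, (N - m).choose k * N ^ k ≤ N.choose k * (N - m) ^ k := by
  intro k
  induction k with
  | zero => simp
  | succ j ih =>
    have key : (j+1) * ((N - m).choose (j+1) * N ^ (j+1)) ≤ (j+1) * (N.choose (j+1) * (N - m) ^ (j+1)) := by
      have e1 : (j+1) * ((N - m).choose (j+1) * N ^ (j+1)) = ((N-m).choose j * N ^ j) * ((N - m - j) * N) := by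
        rw [pow_succ]
        rw [show (j+1) * ((N - m).choose (j+1) * (N ^ j * N)) = ((N-m).choose (j+1) * (j+1)) * N ^ j * N by ring,
          Nat.choose_succ_right_eq]
        ring
      have e2 : (j+1) * (N.choose (j+1) * (N - m) ^ (j+1)) = (N.choose j * (N - m) ^ j) * ((N - j) * (N - m)) := by
        rw [pow_succ]
        rw [show (j+1) * (N.choose (j+1) * ((N-m) ^ j * (N-m))) = (N.choose (j+1) * (j+1)) * (N-m) ^ j * (N-m) by ring,
          Nat.choose_succ_right_eq]
        ring
      rw [e1, e2]
      exact Nat.mul_le_mul ih (aux_step N m j hm)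
    exact Nat.le_of_mul_le_mul_left key (Nat.succ_pos j)

lemma aux_count (v : V) (j : ℕ) :
    ((Finset.univ.powersetCard (j+1)).filter (fun S => v ∈ S)).card
      = (Fintype.card V - 1).choose j := by
  have hv : v ∉ Finset.univ.erase v := notMem_erase v _
  have huniv : (Finset.univ : Finset V) = insert v (Finset.univ.erase v) :=
    (insert_erase (mem_univ v)).symm
  rw [huniv, powersetCard_succ_insert hv, filter_union]
  have h1 : ((Finset.univ.erase v).powersetCard (j+1)).filter (fun S => v ∈ S) = ∅ := by
    apply filter_eq_empty_iff.2
    intro S hS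
    rw [mem_powersetCard] at hS
    exact fun hvS => (notMem_erase v _) (hS.1 hvS)
  have h2 : (((Finset.univ.erase v).powersetCard j).image (insert v)).filter (fun S => v ∈ S)
      = ((Finset.univ.erase v).powersetCard j).image (insert v) := by
    apply filter_eq_self.2
    intro S hS
    obtain ⟨T, _, rfl⟩ := mem_image.1 hS
    exact mem_insert_self v T
  rw [h1, h2, empty_union, card_image_of_injOn, card_powersetCard, card_erase_of_mem (mem_univ v), card_univ]
  intro a ha b hb hab
  rw [mem_coe, mem_powersetCard] at ha hb
  have hva : v ∉ a := fun h => (notMem_erase v _) (ha.1 h)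
  have hvb : v ∉ b := fun h => (notMem_erase v _) (hb.1 h)
  have := congrArg (fun s => Finset.erase s v) hab
  simpa [erase_insert hva, erase_insert hvb] using this

lemma aux_sum (y : Finset V) (j : ℕ) :
    ∑ S ∈ Finset.univ.powersetCard (j+1), (S ∩ y).card
      = y.card * (Fintype.card V - 1).choose j := by
  have hc : ∀ S : Finset V, (S ∩ y).card = ∑ v ∈ y, if v ∈ S then 1 else 0 := by
    intro S
    rw [inter_comm, ← Finset.filter_mem_eq_inter, Finset.card_filter]
  simp_rw [hc]
  rw [Finset.sum_comm]
  have : ∀ v ∈ y, (∑ S ∈ Finset.univ.powersetCard (j+1), if v ∈ S then 1 else 0)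
      = (Fintype.card V - 1).choose j := by
    intro v _
    rw [← Finset.card_filter, aux_count]
  rw [Finset.sum_congr rfl this, Finset.sum_const, smul_eq_mul]

lemma aux_empty (y : Finset V) (k : ℕ) :
    ((Finset.univ.powersetCard k).filter (fun S => S ∩ y = ∅)).card
      = (Fintype.card V - y.card).choose k := by
  have : (Finset.univ.powersetCard k).filter (fun S => S ∩ y = ∅)
      = (Finset.univ \ y).powersetCard k := by
    ext S
    simp only [mem_filter, mem_powersetCard, subset_sdiff, ← disjoint_iff_inter_eq_empty]
    tauto
  rw [this, card_powersetCard, card_sdiff_of_subset (subset_univ y), card_univ]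

lemma aux_max (c : ℕ) :
    max 0 ((c:ℝ) - 1) = ((c:ℝ) - 1) + if c = 0 then (1:ℝ) else 0 := by
  rcases Nat.eq_zero_or_pos c with h | h
  · subst h; norm_num
  · rw [if_neg h.ne', add_zero, max_eq_right]
    have : (1:ℝ) ≤ c := by exact_mod_cast h
    linarith

end helpers

theorem stmt_15 {V : Type*} [Fintype V] [DecidableEq V] (N k : ℕ)
    (hN : Fintype.card V = N) (hk : k ≤ N) (hN0 : 0 < N) (y : Finset V) :
    (∑ S ∈ Finset.univ.powersetCard k, max 0 (((S ∩ y).card : ℝ) - 1))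
        / (N.choose k : ℝ)
      ≤ ((k : ℝ) * y.card / N) ^ 2 / 2 := by
  have hm : y.card ≤ N := by rw [← hN, ← card_univ]; exact card_le_card (subset_univ y)
  set m := y.card with hmdef
  obtain rfl | ⟨j, rfl⟩ : k = 0 ∨ ∃ j, k = j + 1 :=
    (Nat.eq_zero_or_pos k).imp id (fun h => ⟨k - 1, (Nat.succ_pred_eq_of_pos h).symm⟩)
  · have : (∑ S ∈ Finset.univ.powersetCard 0, max 0 (((S ∩ y).card : ℝ) - 1)) = 0 := by
      simp [Finset.powersetCard_zero]
    rw [this, zero_div]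
    positivity
  set K := j + 1 with hK
  have hC : (0:ℝ) < (N.choose K : ℝ) := by exact_mod_cast Nat.choose_pos hk
  have hNr : (0:ℝ) < (N:ℝ) := by exact_mod_cast hN0
  -- sum identity
  have hsum : (∑ S ∈ Finset.univ.powersetCard K, max 0 (((S ∩ y).card : ℝ) - 1))
      = (m * (N-1).choose j : ℕ) - (N.choose K : ℕ) + ((N - m).choose K : ℕ) := by
    have := fun S : Finset V => aux_max ((S ∩ y).card)
    rw [Finset.sum_congr rfl (fun S _ => this S)]
    rw [Finset.sum_add_distrib, Finset.sum_sub_distrib, Finset.sum_const, Finset.sum_boole]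
    have e1 : (∑ S ∈ Finset.univ.powersetCard K, ((S ∩ y).card : ℝ))
        = (m * (N-1).choose j : ℕ) := by
      have h := aux_sum y j
      rw [hN] at h
      exact_mod_cast h
    have e2 : ((Finset.univ.powersetCard K).filter (fun S => (S ∩ y).card = 0)).card
        = ((N - m).choose K : ℕ) := by
      have hfe : (Finset.univ.powersetCard K).filter (fun S => (S ∩ y).card = 0)
          = (Finset.univ.powersetCard K).filter (fun S => S ∩ y = ∅) := by
        apply Finset.filter_congr
        intro S _
        exact Finset.card_eq_zero
      rw [hfe, aux_empty, hN]
    have e3 : ((Finset.univ : Finset V).powersetCard K).card = N.choose K := by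
      rw [card_powersetCard, card_univ, hN]
    rw [e1, e2, e3]
    push_cast
    ring
  rw [hsum, div_le_iff₀ hC]
  -- key facts
  have hNk : (0:ℝ) < (N:ℝ)^K := by positivity
  have hD : (N:ℝ) * ((N-1).choose j : ℝ) = (N.choose K : ℝ) * K := by
    have h := Nat.add_one_mul_choose_eq (N-1) j
    simp only [Nat.succ_eq_add_one, Nat.sub_add_cancel hN0] at h
    exact_mod_cast h
  have hA : ((N - m).choose K : ℝ) * (N:ℝ)^K ≤ (N.choose K : ℝ) * ((N:ℝ) - m)^K := by
    have h := aux_choose N m hm K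
    have h2 : ((N - m).choose K : ℝ) * ((N:ℕ):ℝ)^K ≤ (N.choose K : ℝ) * (((N-m:ℕ)):ℝ)^K := by
      exact_mod_cast h
    rwa [Nat.cast_sub hm] at h2
  have hA' : ((N - m).choose K : ℝ) ≤ (N.choose K : ℝ) * (1 - (m:ℝ)/N)^K := by
    have h1 : (1 - (m:ℝ)/N) = ((N:ℝ) - m)/N := by field_simp
    rw [h1, div_pow, ← mul_div_assoc, le_div_iff₀ hNk]
    exact hA
  have hx0 : (0:ℝ) ≤ (m:ℝ)/N := by positivity
  have hx1 : (m:ℝ)/N ≤ 1 := by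
    rw [div_le_one hNr]; exact_mod_cast hm
  have hpow := aux_pow K ((m:ℝ)/N) hx0 hx1
  have hA'' : ((N - m).choose K : ℝ) ≤ (N.choose K : ℝ) * (1 - K * ((m:ℝ)/N) + (K * ((m:ℝ)/N))^2/2) :=
    hA'.trans (mul_le_mul_of_nonneg_left hpow hC.le)
  -- from hD : m * D = C*K*m/N
  have hD' : (m:ℝ) * ((N-1).choose j : ℝ) = (N.choose K : ℝ) * K * m / N := by
    field_simp
    nlinarith [hD]
  push_cast [hK] at hA'' hD' ⊢
  have hexp : (((j:ℝ)+1) * m / N)^2 / 2 * (N.choose K)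
      = (N.choose K : ℝ) * ((j:ℝ)+1) * m / N - N.choose K
        + (N.choose K : ℝ) * (1 - ((j:ℝ)+1) * ((m:ℝ)/N) + (((j:ℝ)+1) * ((m:ℝ)/N))^2/2) := by
    field_simp
    ring
  rw [hexp]
  linarith [hA'', hD']
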